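/- arXiv:2201.13244 — 4 statements merged into one kernel-verified Lean document; each statement's English description precedes it below -/
import Mathlib

section
/- Let w(x,y) be a word in the free group on two generators, and suppose there is a real constant γ < 1 such that for every finite group X in which w is not an identity, the probability that w(x₁, x₂) = 1 for uniformly random x₁, x₂ ∈ X is at most γ. If m ≤ n are positive integers and a finite group G has the w_{m,n}-property, then either w is an identity in G or |G| ≤ (2/(1-γ))^m · (n-1). -/
/-- Evaluation of a word `w ∈ F₂` at a pair of elements of a group. -/
def wEval {G : Type*} [Group G] (w : FreeGroup (Fin 2)) (x y : G) : G :=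
  FreeGroup.lift (fun i => if i = 0 then x else y) w

open Finset

lemma aux_pow_le_descFactorial (d m : ℕ) : (d - (m-1))^m ≤ d.descFactorial m := by
  induction m with
  | zero => simp
  | succ k ih =>
    rw [Nat.descFactorial_succ, Nat.succ_sub_one, pow_succ']
    exact Nat.mul_le_mul_left _ <| le_trans
      (Nat.pow_le_pow_left (Nat.sub_le_sub_left (Nat.sub_le k 1) d) k) ih

set_option maxHeartbeats 1000000 in
/-- Main theorem: if the probability that `w(x₁,x₂)=1` is at most `γ < 1` in every
finite group where `w` is not an identity, and a finite group `G` has the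
`w_{m,n}`-property with `m ≤ n`, then either `w` is an identity in `G` or
`|G| ≤ (2/(1-γ))^m * (n-1)`. -/
theorem main_theorem (w : FreeGroup (Fin 2)) (γ : ℝ) (hγ : γ < 1)
    (hprob : ∀ (X : Type) [Group X] [Fintype X] [DecidableEq X],
      (¬ ∀ x y : X, wEval w x y = 1) →
      ((Finset.univ.filter (fun p : X × X => wEval w p.1 p.2 = 1)).card : ℝ)
        ≤ γ * (Fintype.card X : ℝ) ^ 2)
    (m n : ℕ) (hm : 0 < m) (hmn : m ≤ n)
    (G : Type) [Group G] [Fintype G] [DecidableEq G]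
    (hprop : ∀ M N : Finset G, M.card = m → N.card = n →
      ∃ x ∈ M, ∃ y ∈ N, wEval w x y = 1) :
    (∀ x y : G, wEval w x y = 1) ∨
      (Fintype.card G : ℝ) ≤ (2 / (1 - γ)) ^ m * ((n : ℝ) - 1) := by
  by_cases hid : ∀ x y : G, wEval w x y = 1
  · exact Or.inl hid
  right
  have hn1 : 1 ≤ n := le_trans hm hmn
  set N := Fintype.card G with hNdef
  have hN1 : 1 ≤ N := Fintype.card_pos
  have hNr : (1:ℝ) ≤ (N:ℝ) := by exact_mod_cast hN1
  have hNpos : (0:ℝ) < N := by linarith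
  set S : ℕ := (Finset.univ.filter (fun p : G × G => wEval w p.1 p.2 = 1)).card with hSdef
  have hsol : (S:ℝ) ≤ γ * (N:ℝ)^2 := hprob G hid
  have hγ0 : 0 ≤ γ := by
    have h0 : (0:ℝ) ≤ (S:ℝ) := Nat.cast_nonneg _
    have h1 : (0:ℝ) < (N:ℝ)^2 := by positivity
    nlinarith
  -- degree function
  set d : G → ℕ := fun y => (univ.filter fun x => wEval w x y ≠ 1).card with hddef
  -- sum of degrees
  have hprodcard : (univ.filter fun p : G × G => ¬ wEval w p.1 p.2 = 1).card = ∑ y : G, d y := by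
    rw [Finset.card_filter, Fintype.sum_prod_type, Finset.sum_comm]
    exact Finset.sum_congr rfl fun y _ => (Finset.card_filter _ _).symm
  have hcards : S + ∑ y : G, d y = N ^ 2 := by
    rw [← hprodcard, hSdef, Finset.card_filter_add_card_filter_not, Finset.card_univ]
    simp [Fintype.card_prod, sq, hNdef]
  -- key property: for every m-set, at most n-1 common "non-solutions"
  have hkey : ∀ s : Finset G, s.card = m →
      (univ.filter fun y => ∀ x ∈ s, wEval w x y ≠ 1).card ≤ n - 1 := by
    intro s hs
    by_contra h
    push_neg at h
    have hge : n ≤ (univ.filter fun y => ∀ x ∈ s, wEval w x y ≠ 1).card := by omega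
    obtain ⟨t, hts, htc⟩ := Finset.exists_subset_card_eq hge
    obtain ⟨x, hx, y, hy, hxy⟩ := hprop s t hs htc
    exact (Finset.mem_filter.mp (hts hy)).2 x hx hxy
  -- double counting
  have hcount : ∑ y : G, (d y).choose m ≤ (n - 1) * N.choose m := by
    have h1 : ∀ y : G, (d y).choose m =
        ((univ.powersetCard m).filter
          (fun s => s ⊆ univ.filter fun x => wEval w x y ≠ 1)).card := by
      intro y
      rw [← Finset.card_powersetCard]
      congr 1
      ext s
      simp only [Finset.mem_powersetCard, Finset.mem_filter, Finset.subset_univ, true_and]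
      tauto
    calc ∑ y : G, (d y).choose m
        = ∑ y : G, ∑ s ∈ univ.powersetCard m,
            (if s ⊆ univ.filter (fun x => wEval w x y ≠ 1) then 1 else 0) := by
          refine Finset.sum_congr rfl fun y _ => ?_
          rw [h1 y, Finset.card_filter]
      _ = ∑ s ∈ univ.powersetCard m, ∑ y : G,
            (if s ⊆ univ.filter (fun x => wEval w x y ≠ 1) then 1 else 0) :=
          Finset.sum_comm
      _ ≤ ∑ _s ∈ univ.powersetCard m, (n - 1) := by
          refine Finset.sum_le_sum fun s hs => ?_
          have hsc : s.card = m := (Finset.mem_powersetCard.mp hs).2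
          have := hkey s hsc
          calc ∑ y : G, (if s ⊆ univ.filter (fun x => wEval w x y ≠ 1) then 1 else 0)
              = (univ.filter fun y => s ⊆ univ.filter (fun x => wEval w x y ≠ 1)).card :=
                (Finset.card_filter _ _).symm
            _ ≤ (univ.filter fun y => ∀ x ∈ s, wEval w x y ≠ 1).card := by
                apply Finset.card_le_card
                intro y hy
                simp only [Finset.mem_filter, Finset.mem_univ, true_and] at hy ⊢
                intro x hx
                exact (Finset.mem_filter.mp (hy hx)).2
            _ ≤ n - 1 := this
      _ = N.choose m * (n - 1) := by
          rw [Finset.sum_const, smul_eq_mul, Finset.card_powersetCard, Finset.card_univ]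
      _ = (n - 1) * N.choose m := Nat.mul_comm _ _
  -- nat inequality
  have h2 : ∑ y : G, (d y - (m-1))^m ≤ (n - 1) * N ^ m := by
    calc ∑ y : G, (d y - (m-1))^m
        ≤ ∑ y : G, (d y).descFactorial m :=
          Finset.sum_le_sum fun y _ => aux_pow_le_descFactorial (d y) m
      _ = m.factorial * ∑ y : G, (d y).choose m := by
          rw [Finset.mul_sum]
          exact Finset.sum_congr rfl fun y _ => Nat.descFactorial_eq_factorial_mul_choose _ _
      _ ≤ m.factorial * ((n - 1) * N.choose m) := Nat.mul_le_mul_left _ hcount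
      _ = (n - 1) * (m.factorial * N.choose m) := by ring
      _ = (n - 1) * N.descFactorial m := by rw [Nat.descFactorial_eq_factorial_mul_choose]
      _ ≤ (n - 1) * N ^ m := Nat.mul_le_mul_left _ (Nat.descFactorial_le_pow _ _)
  -- pass to reals
  set a : G → ℝ := fun y => ((d y - (m-1) : ℕ) : ℝ) with hadef
  have ha0 : ∀ y ∈ (univ : Finset G), 0 ≤ a y := fun y _ => Nat.cast_nonneg _
  have hpm : (∑ y : G, a y)^m / (N:ℝ)^(m-1) ≤ ∑ y : G, (a y)^m := by
    obtain ⟨k, hk⟩ : ∃ k, m = k + 1 := ⟨m-1, (Nat.succ_pred_eq_of_pos hm).symm⟩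
    subst hk
    have := pow_sum_div_card_le_sum_pow (s := (univ : Finset G)) (f := a) ha0 k
    simpa [Finset.card_univ] using this
  have hsumpow : (∑ y : G, (a y)^m) ≤ ((n:ℝ) - 1) * (N:ℝ)^m := by
    calc ∑ y : G, (a y)^m = ((∑ y : G, (d y - (m-1))^m : ℕ) : ℝ) := by
          push_cast
          rfl
      _ ≤ (((n-1) * N^m : ℕ) : ℝ) := Nat.cast_le.mpr h2
      _ = ((n:ℝ) - 1) * (N:ℝ)^m := by
          push_cast [Nat.cast_sub hn1]
          ring
  have hsum_d : (∑ y : G, (d y : ℝ)) = (N:ℝ)^2 - S := by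
    have h := congrArg (fun t : ℕ => (t : ℝ)) hcards
    push_cast at h
    linarith
  have hm1 : ((m-1:ℕ):ℝ) = (m:ℝ) - 1 := by
    push_cast [Nat.cast_sub hm]
    ring
  have hge : ∀ y : G, (d y : ℝ) - ((m:ℝ) - 1) ≤ a y := by
    intro y
    rcases le_total (m-1) (d y) with h | h
    · rw [hadef]
      simp only
      rw [Nat.cast_sub h, hm1]
    · have h1 : (d y : ℝ) ≤ ((m-1:ℕ):ℝ) := Nat.cast_le.mpr h
      have h2 : (0:ℝ) ≤ a y := ha0 y (Finset.mem_univ y)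
      rw [hm1] at h1
      linarith
  have hsum_a : (N:ℝ) * ((1-γ) * N - ((m:ℝ)-1)) ≤ ∑ y : G, a y := by
    have h3 : ∑ y : G, ((d y:ℝ) - ((m:ℝ)-1)) ≤ ∑ y : G, a y :=
      Finset.sum_le_sum (fun y _ => hge y)
    rw [Finset.sum_sub_distrib, hsum_d, Finset.sum_const, Finset.card_univ,
      nsmul_eq_mul] at h3
    nlinarith [hsol]
  set c : ℝ := (1-γ)/2 with hcdef
  have hc : 0 < c := by rw [hcdef]; linarith
  have hc1 : c ≤ 1 := by rw [hcdef]; linarith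
  have h2c : (2/(1-γ)) = 1/c := by rw [hcdef, one_div_div]
  rw [h2c, div_pow, one_pow, div_mul_eq_mul_div, one_mul,
    le_div_iff₀ (pow_pos hc m)]
  -- goal : (N:ℝ) * c^m ≤ (n:ℝ) - 1
  rcases le_or_gt ((m:ℝ)-1) (c*N) with hA | hB
  · -- main case
    have h4 : (N:ℝ)*(c*N) ≤ ∑ y : G, a y := by
      have h5 : c*(N:ℝ) ≤ (1-γ)*N - ((m:ℝ)-1) := by
        rw [hcdef] at hA ⊢
        linarith
      nlinarith
    have h6 : ((N:ℝ)*(c*N))^m / (N:ℝ)^(m-1) ≤ ((n:ℝ) - 1) * (N:ℝ)^m := by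
      calc ((N:ℝ)*(c*N))^m / (N:ℝ)^(m-1)
          ≤ (∑ y : G, a y)^m / (N:ℝ)^(m-1) := by
            apply div_le_div_of_nonneg_right ?_ (by positivity)
            exact pow_le_pow_left₀ (by positivity) h4 m
        _ ≤ ∑ y : G, (a y)^m := hpm
        _ ≤ ((n:ℝ) - 1) * (N:ℝ)^m := hsumpow
    have e : ((N:ℝ)*(c*N))^m = c^m * ((N:ℝ)^(m-1) * ((N:ℝ)^m * N)) := by
      have h9 : (N:ℝ)^(m-1) * ((N:ℝ)^m * N) = (N:ℝ)^m * (N:ℝ)^m := by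
        rw [← pow_succ, ← pow_add, ← pow_add]
        congr 1
        omega
      rw [h9, show (N:ℝ)*(c*N) = c*((N:ℝ)*(N:ℝ)) by ring, mul_pow, mul_pow]
    rw [e] at h6
    have hNm1 : (0:ℝ) < (N:ℝ)^(m-1) := by positivity
    rw [mul_div_assoc, mul_comm ((N:ℝ)^(m-1)), mul_div_assoc, div_self (ne_of_gt hNm1),
      mul_one] at h6
    -- h6 : c^m * ((N:ℝ)^m * N) ≤ (n-1) * N^m
    have hNm : (0:ℝ) < (N:ℝ)^m := by positivity
    have h7 : ((N:ℝ) * c^m) * (N:ℝ)^m ≤ (((n:ℝ)-1)) * (N:ℝ)^m := by linear_combination h6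
    exact le_of_mul_le_mul_right h7 hNm
  · -- degenerate case
    have hm' : m - 1 + 1 = m := Nat.succ_pred_eq_of_pos hm
    have hmr : (1:ℝ) ≤ (m:ℝ) := by exact_mod_cast hm
    have hnm : ((m:ℝ)) ≤ (n:ℝ) := by exact_mod_cast hmn
    have hcsplit : c^m = c^(m-1)*c := by rw [← pow_succ, hm']
    calc (N:ℝ) * c^m = ((N:ℝ)*c)*c^(m-1) := by rw [hcsplit]; ring
      _ ≤ ((m:ℝ)-1)*c^(m-1) := by
          have hNc : (N:ℝ)*c ≤ (m:ℝ)-1 := by linarith [hB, mul_comm c (N:ℝ)]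
          exact mul_le_mul_of_nonneg_right hNc (le_of_lt (pow_pos hc _))
      _ ≤ ((m:ℝ)-1)*1 := by
          apply mul_le_mul_of_nonneg_left (pow_le_one₀ (le_of_lt hc) hc1) (by linarith)
      _ ≤ (n:ℝ) - 1 := by linarith
end

section
/- If G is a finite non-abelian group, then the number of pairs (x,y) ∈ G × G with xy = yx is at most (5/8)·|G|². -/
open Finset

lemma gustafson_index_ge (G : Type*) [Group G] [Fintype G]
    (hnab : ¬ ∀ x y : G, x * y = y * x) : 4 ≤ (Subgroup.center G).index := by
  set H := Subgroup.center G
  have hne : H.index ≠ 0 := Subgroup.index_ne_zero_of_finite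
  by_contra h
  push_neg at h
  interval_cases hi : H.index
  · exact hne rfl
  · -- index 1: center = ⊤
    have : H = ⊤ := Subgroup.index_eq_one.mp hi
    exact hnab fun x y => by
      have hx : x ∈ Subgroup.center G := by rw [show Subgroup.center G = H from rfl, this]; trivial
      exact ((Subgroup.mem_center_iff.mp hx) y).symm
  · have hcard : Nat.card (G ⧸ H) = 2 := hi
    have : IsCyclic (G ⧸ H) :=
      isCyclic_of_prime_card (p := 2) hcard
    exact hnab fun x y =>
      (commutative_of_cyclic_center_quotient (QuotientGroup.mk' H)
        (by simp [QuotientGroup.ker_mk']; exact le_rfl) x y)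
  · have hcard : Nat.card (G ⧸ H) = 3 := hi
    have : IsCyclic (G ⧸ H) :=
      isCyclic_of_prime_card (p := 3) hcard
    exact hnab fun x y =>
      (commutative_of_cyclic_center_quotient (QuotientGroup.mk' H)
        (by simp [QuotientGroup.ker_mk']; exact le_rfl) x y)

/-- Gustafson's theorem: a finite non-abelian group has at most `(5/8)·|G|²`
commuting pairs. -/
theorem gustafson (G : Type*) [Group G] [Fintype G] [DecidableEq G]
    (hnab : ¬ ∀ x y : G, x * y = y * x) :
    ((Finset.univ.filter (fun p : G × G => p.1 * p.2 = p.2 * p.1)).card : ℝ)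
      ≤ (5 / 8 : ℝ) * (Fintype.card G : ℝ) ^ 2 := by
  classical
  set n := Fintype.card G with hn
  set f : G → ℕ := fun x => (univ.filter fun y => x * y = y * x).card with hf
  -- split the pair count as a sum of centralizer sizes
  have key : (univ.filter (fun p : G × G => p.1 * p.2 = p.2 * p.1)).card = ∑ x : G, f x := by
    rw [Finset.card_eq_sum_card_fiberwise
      (f := Prod.fst) (t := univ) (fun p _ => Finset.mem_univ p.1)]
    refine Finset.sum_congr rfl fun x _ => ?_
    refine Finset.card_bij (fun p _ => p.2) ?_ ?_ ?_
    · intro p hp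
      simp only [mem_filter, mem_univ, true_and] at hp ⊢
      rw [← hp.2]; exact hp.1
    · intro p hp q hq hpq
      simp only [mem_filter, mem_univ, true_and] at hp hq
      exact Prod.ext (hp.2.trans hq.2.symm) hpq
    · intro y hy
      simp only [mem_filter, mem_univ, true_and] at hy
      exact ⟨(x, y), by simp [hy], rfl⟩
  -- size of centralizer of non-central element
  have hbound : ∀ x : G, x ∉ Subgroup.center G → 2 * f x ≤ n := by
    intro x hx
    have hcard : f x = Nat.card {y : G // y ∈ Subgroup.centralizer ({x} : Set G)} := by
      rw [Nat.card_eq_fintype_card, Fintype.card_subtype]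
      refine congrArg Finset.card ?_
      ext y
      simp only [mem_filter, mem_univ, true_and]
      rw [Subgroup.mem_centralizer_singleton_iff]
      exact eq_comm
    have hdvd : f x ∣ n := by
      rw [hcard, hn, Fintype.card_eq_nat_card]
      exact Subgroup.card_subgroup_dvd_card _
    have hlt : f x < n := by
      have : ∃ y : G, ¬ (x * y = y * x) := by
        by_contra h; push_neg at h
        exact hx (Subgroup.mem_center_iff.mpr fun y => (h y).symm)
      obtain ⟨y, hy⟩ := this
      calc f x ≤ (univ.erase y).card := by
              apply Finset.card_le_card
              intro z hz
              simp only [mem_filter, mem_univ, true_and] at hz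
              exact Finset.mem_erase.mpr ⟨fun h => hy (h ▸ hz), mem_univ z⟩
        _ < n := by
              rw [Finset.card_erase_of_mem (mem_univ y), Finset.card_univ]
              exact Nat.sub_lt Fintype.card_pos one_pos
    obtain ⟨k, hk⟩ := hdvd
    rcases Nat.lt_or_ge k 2 with h2 | h2
    · interval_cases k <;> omega
    · calc 2 * f x ≤ k * f x := Nat.mul_le_mul_right _ h2
        _ = n := by rw [hk, Nat.mul_comm]
  -- center is small
  set Z := (univ.filter fun x : G => x ∈ Subgroup.center G) with hZ
  have hzcard : 4 * Z.card ≤ n := by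
    have h1 : Nat.card (Subgroup.center G) = Z.card := by
      rw [Nat.card_eq_fintype_card, Fintype.card_subtype]
    have h2 := Subgroup.card_mul_index (Subgroup.center G)
    have h3 := gustafson_index_ge G hnab
    have h4 : Nat.card G = n := Nat.card_eq_fintype_card
    nlinarith [h2, h3, h1, h4]
  -- put it together over ℝ
  rw [key]
  push_cast
  rw [← Finset.sum_filter_add_sum_filter_not univ (fun x : G => x ∈ Subgroup.center G)]
  have hA : ∑ x ∈ Z, (f x : ℝ) ≤ Z.card * n := by
    rw [← nsmul_eq_mul]
    apply Finset.sum_le_card_nsmul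
    intro x _
    exact_mod_cast Finset.card_le_card (Finset.filter_subset _ _) |>.trans (le_of_eq (by simp [hn]))
  have hB : ∑ x ∈ univ.filter (fun x : G => ¬ x ∈ Subgroup.center G), (f x : ℝ)
      ≤ (univ.filter (fun x : G => ¬ x ∈ Subgroup.center G)).card * (n / 2) := by
    rw [← nsmul_eq_mul]
    apply Finset.sum_le_card_nsmul
    intro x hx
    simp only [mem_filter] at hx
    have := hbound x hx.2
    have : (2 : ℝ) * f x ≤ n := by exact_mod_cast this
    linarith
  have hsplit : Z.card + (univ.filter (fun x : G => ¬ x ∈ Subgroup.center G)).card = n := by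
    rw [hZ, Finset.card_filter_add_card_filter_not, Finset.card_univ]
  have hzr : (4 : ℝ) * Z.card ≤ n := by exact_mod_cast hzcard
  have hc2 : ((univ.filter (fun x : G => ¬ x ∈ Subgroup.center G)).card : ℝ) = n - Z.card := by
    have := hsplit; push_cast [← this]; ring
  calc (∑ x ∈ Z, (f x : ℝ)) + ∑ x ∈ univ.filter (fun x : G => ¬ x ∈ Subgroup.center G), (f x : ℝ)
      ≤ Z.card * n + (n - Z.card) * (n / 2) := by rw [← hc2]; linarith [hA, hB]
    _ ≤ 5 / 8 * n ^ 2 := by nlinarith [hzr]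
end

section
/- Assume there exists a constant δ < 1 such that for every finite group X in which the 2-Engel word [x,y,y] is not an identity, the probability that [g₁,g₂,g₂] = 1 for uniformly random g₁, g₂ ∈ X is at most δ. Then, setting τ = 2/(1-δ), for all positive integers m ≤ n and every finite group G with the [x,y,y]_{m,n}-property, either [x,y,y] is an identity in G (i.e., G is 2-Engel) or |G| ≤ τ^m · (n-1). -/
open scoped commutatorElement

private lemma engel_aux_pow (m n : ℕ) (hm : 1 ≤ m) (hmn : m ≤ n) :
    m * m - m ≤ (2 ^ m - 1) * (n - 1) := by
  have h1 : m < 2 ^ m := Nat.lt_two_pow_self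
  have h2 : m * m - m = m * (m - 1) := by
    cases m with
    | zero => simp
    | succ k =>
      have : (k + 1) * (k + 1) = (k + 1) * k + (k + 1) := by ring
      simp only [Nat.succ_sub_one]
      omega
  rw [h2]
  exact Nat.mul_le_mul (by omega) (by omega)

/-- Corollary for the 2-Engel word `[x,y,y]`: with `τ = 2/(1-δ)`, if `m ≤ n` and a
finite group `G` has the `[x,y,y]_{m,n}`-property, then either `[x,y,y]` is an
identity in `G` or `|G| ≤ τ^m · (n-1)`. -/
theorem engel_corollary (δ : ℝ) (hδ : δ < 1)
    (hprob : ∀ (X : Type) [Group X] [Fintype X] [DecidableEq X],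
      (¬ ∀ x y : X, ⁅⁅x, y⁆, y⁆ = 1) →
      ((Finset.univ.filter (fun p : X × X => ⁅⁅p.1, p.2⁆, p.2⁆ = 1)).card : ℝ)
        ≤ δ * (Fintype.card X : ℝ) ^ 2) :
    ∀ (m n : ℕ), 0 < m → m ≤ n →
      ∀ (G : Type) [Group G] [Fintype G] [DecidableEq G],
        (∀ M N : Finset G, M.card = m → N.card = n →
          ∃ x ∈ M, ∃ y ∈ N, ⁅⁅x, y⁆, y⁆ = 1) →
        (∀ x y : G, ⁅⁅x, y⁆, y⁆ = 1) ∨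
          (Fintype.card G : ℝ) ≤ (2 / (1 - δ)) ^ m * ((n : ℝ) - 1) := by
  intro m n hm hmn G _ _ _ hprop
  classical
  by_cases hE : ∀ x y : G, ⁅⁅x, y⁆, y⁆ = 1
  · exact Or.inl hE
  refine Or.inr ?_
  by_contra hq
  push_neg at hq
  have hn1 : 1 ≤ n := le_trans hm hmn
  have hδ' : (0 : ℝ) < 1 - δ := by linarith
  have hq0 : 0 < Fintype.card G := Fintype.card_pos
  have hQ0 : (0 : ℝ) < (Fintype.card G : ℝ) := by exact_mod_cast hq0
  -- `d y` : number of `x` with `[x,y,y] ≠ 1`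
  -- `Fs t` : set of `y` bad for every entry of the tuple `t`
  set d : G → ℕ := fun y => (Finset.univ.filter fun x : G => ¬ ⁅⁅x, y⁆, y⁆ = 1).card with hd
  set Fs : (Fin m → G) → Finset G :=
    fun t => Finset.univ.filter fun y : G => ∀ i, ¬ ⁅⁅t i, y⁆, y⁆ = 1 with hFs
  -- good pairs + bad pairs = |G|^2
  have hsum_d : (Finset.univ.filter fun p : G × G => ⁅⁅p.1, p.2⁆, p.2⁆ = 1).card
      + ∑ y : G, d y = Fintype.card G * Fintype.card G := by
    have h1 : (Finset.univ.filter fun p : G × G => ⁅⁅p.1, p.2⁆, p.2⁆ = 1).card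
        = ∑ y : G, (Finset.univ.filter fun x : G => ⁅⁅x, y⁆, y⁆ = 1).card := by
      rw [Finset.card_filter, Fintype.sum_prod_type, Finset.sum_comm]
      simp only [Finset.card_filter]
    rw [h1, ← Finset.sum_add_distrib]
    have h2 : ∀ y : G,
        (Finset.univ.filter fun x : G => ⁅⁅x, y⁆, y⁆ = 1).card + d y = Fintype.card G := by
      intro y
      rw [hd]
      simpa using Finset.card_filter_add_card_filter_not
        (s := (Finset.univ : Finset G)) (p := fun x : G => ⁅⁅x, y⁆, y⁆ = 1)
    simp [h2, Finset.card_univ]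
  -- real lower bound on the number of bad pairs
  have hgood := hprob G hE
  have hSd : (1 - δ) * (Fintype.card G : ℝ) ^ 2 ≤ ∑ y : G, (d y : ℝ) := by
    have hc : ((Finset.univ.filter fun p : G × G => ⁅⁅p.1, p.2⁆, p.2⁆ = 1).card : ℝ)
        + ∑ y : G, (d y : ℝ) = (Fintype.card G : ℝ) * (Fintype.card G : ℝ) := by
      exact_mod_cast congrArg (Nat.cast : ℕ → ℝ) hsum_d
    have hsq : ((Fintype.card G : ℝ)) ^ 2 = (Fintype.card G : ℝ) * (Fintype.card G : ℝ) := sq _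
    linarith
  -- ∑ over tuples of |Fs t| = ∑_y (d y)^m
  have hCount : ∑ t : Fin m → G, (Fs t).card = ∑ y : G, d y ^ m := by
    have h1 : ∀ y : G, (Finset.univ.filter fun t : Fin m → G => ∀ i, ¬ ⁅⁅t i, y⁆, y⁆ = 1)
        = Fintype.piFinset
            (fun _ : Fin m => Finset.univ.filter fun x : G => ¬ ⁅⁅x, y⁆, y⁆ = 1) := by
      intro y; ext t; simp [Fintype.mem_piFinset]
    calc ∑ t : Fin m → G, (Fs t).card
        = ∑ t : Fin m → G, ∑ y : G, if (∀ i, ¬ ⁅⁅t i, y⁆, y⁆ = 1) then 1 else 0 := by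
          simp only [hFs, Finset.card_filter]
      _ = ∑ y : G, ∑ t : Fin m → G, if (∀ i, ¬ ⁅⁅t i, y⁆, y⁆ = 1) then 1 else 0 :=
          Finset.sum_comm
      _ = ∑ y : G, d y ^ m := by
          refine Finset.sum_congr rfl fun y _ => ?_
          rw [← Finset.card_filter, h1 y, Fintype.card_piFinset]
          simp [hd]
  -- counting non-injective tuples
  have hninj : (Finset.univ.filter fun t : Fin m → G => ¬ Function.Injective t).card
      ≤ (m * m - m) * Fintype.card G ^ (m - 1) := by
    have hsub : (Finset.univ.filter fun t : Fin m → G => ¬ Function.Injective t)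
        ⊆ (Finset.univ : Finset (Fin m)).offDiag.biUnion
            (fun ij => Finset.univ.filter fun t : Fin m → G => t ij.1 = t ij.2) := by
      intro t ht
      simp only [Finset.mem_filter, Finset.mem_univ, true_and] at ht
      rw [Function.Injective] at ht
      push_neg at ht
      obtain ⟨i, j, hij, hne⟩ := ht
      exact Finset.mem_biUnion.mpr ⟨(i, j), by simp [Finset.mem_offDiag, hne], by simp [hij]⟩
    have hcard : ∀ ij : Fin m × Fin m, ij ∈ (Finset.univ : Finset (Fin m)).offDiag →
        (Finset.univ.filter fun t : Fin m → G => t ij.1 = t ij.2).card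
          ≤ Fintype.card G ^ (m - 1) := by
      intro ij hij
      have hne : ij.1 ≠ ij.2 := (Finset.mem_offDiag.mp hij).2.2
      have hle : (Finset.univ.filter fun t : Fin m → G => t ij.1 = t ij.2).card
          ≤ (Finset.univ : Finset ({k : Fin m // k ≠ ij.1} → G)).card := by
        refine Finset.card_le_card_of_injOn (fun t => fun k => t k.val)
          (fun _ _ => Finset.mem_univ _) ?_
        intro t1 h1 t2 h2 hEq
        simp only [Finset.coe_filter, Set.mem_setOf_eq, Finset.mem_univ, true_and] at h1 h2
        funext k
        by_cases hk : k = ij.1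
        · subst hk
          have e1 : t1 ij.2 = t2 ij.2 := congrFun hEq ⟨ij.2, hne.symm⟩
          exact h1.trans (e1.trans h2.symm)
        · exact congrFun hEq ⟨k, hk⟩
      refine hle.trans ?_
      have hcs : Fintype.card {k : Fin m // k ≠ ij.1} = m - 1 := by
        simp [Fintype.card_subtype_compl]
      rw [Finset.card_univ, Fintype.card_fun, hcs]
    calc (Finset.univ.filter fun t : Fin m → G => ¬ Function.Injective t).card
        ≤ ((Finset.univ : Finset (Fin m)).offDiag.biUnion
            (fun ij => Finset.univ.filter fun t : Fin m → G => t ij.1 = t ij.2)).card :=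
          Finset.card_le_card hsub
      _ ≤ ∑ ij ∈ (Finset.univ : Finset (Fin m)).offDiag,
            (Finset.univ.filter fun t : Fin m → G => t ij.1 = t ij.2).card :=
          Finset.card_biUnion_le
      _ ≤ ∑ _ij ∈ (Finset.univ : Finset (Fin m)).offDiag, Fintype.card G ^ (m - 1) :=
          Finset.sum_le_sum hcard
      _ = (m * m - m) * Fintype.card G ^ (m - 1) := by
          rw [Finset.sum_const, smul_eq_mul, Finset.offDiag_card]
          simp
  -- there is an injective tuple with many common bad `y`'s
  have hex : ∃ t : Fin m → G, Function.Injective t ∧ n ≤ (Fs t).card := by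
    by_contra hno
    push_neg at hno
    -- nat upper bound on ∑_y d y ^ m
    have hbound : ∑ y : G, d y ^ m
        ≤ (n - 1) * Fintype.card G ^ m
          + (m * m - m) * Fintype.card G ^ (m - 1) * Fintype.card G := by
      rw [← hCount,
        ← Finset.sum_filter_add_sum_filter_not Finset.univ
          (fun t : Fin m → G => Function.Injective t) (fun t => (Fs t).card)]
      refine Nat.add_le_add ?_ ?_
      · calc ∑ t ∈ Finset.univ.filter (fun t : Fin m → G => Function.Injective t), (Fs t).card
            ≤ (Finset.univ.filter (fun t : Fin m → G => Function.Injective t)).card • (n - 1) := by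
              refine Finset.sum_le_card_nsmul _ _ _ fun t ht => ?_
              have := hno t (Finset.mem_filter.mp ht).2
              omega
          _ = (Finset.univ.filter (fun t : Fin m → G => Function.Injective t)).card * (n - 1) :=
              by rw [smul_eq_mul]
          _ ≤ Fintype.card (Fin m → G) * (n - 1) := by
              refine Nat.mul_le_mul_right _ ?_
              simpa [Finset.card_univ] using
                Finset.card_filter_le Finset.univ (fun t : Fin m → G => Function.Injective t)
          _ = (n - 1) * Fintype.card G ^ m := by
              rw [Fintype.card_fun, Fintype.card_fin, Nat.mul_comm]
      · calc ∑ t ∈ Finset.univ.filter (fun t : Fin m → G => ¬ Function.Injective t), (Fs t).card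
            ≤ (Finset.univ.filter (fun t : Fin m → G => ¬ Function.Injective t)).card
                • Fintype.card G := by
              refine Finset.sum_le_card_nsmul _ _ _ fun t _ => ?_
              simpa [Finset.card_univ] using Finset.card_filter_le (Finset.univ : Finset G)
                (fun y : G => ∀ i, ¬ ⁅⁅t i, y⁆, y⁆ = 1)
          _ ≤ (m * m - m) * Fintype.card G ^ (m - 1) * Fintype.card G := by
              rw [smul_eq_mul]
              exact Nat.mul_le_mul_right _ hninj
    -- now derive a contradiction over ℝ
    set Q : ℝ := (Fintype.card G : ℝ) with hQ
    have hcastc : ((m * m - m : ℕ) : ℝ) = (m : ℝ) * m - m := by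
      have : m ≤ m * m := Nat.le_mul_of_pos_left m hm
      push_cast [this]
      ring
    have hcastn : ((n - 1 : ℕ) : ℝ) = (n : ℝ) - 1 := by push_cast [hn1]; ring
    have hdm : (∑ y : G, (d y : ℝ) ^ m)
        ≤ ((n : ℝ) - 1) * Q ^ m + ((m : ℝ) * m - m) * Q ^ (m - 1) * Q := by
      have h := (Nat.cast_le (α := ℝ)).mpr hbound
      push_cast [hcastc, hcastn] at h
      exact h
    have hJ : (∑ y : G, (d y : ℝ)) ^ m / Q ^ (m - 1) ≤ ∑ y : G, (d y : ℝ) ^ m := by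
      have h := pow_sum_div_card_le_sum_pow (s := (Finset.univ : Finset G))
        (f := fun y => (d y : ℝ)) (fun i _ => by positivity) (m - 1)
      have hm1 : m - 1 + 1 = m := by omega
      rw [hm1, Finset.card_univ] at h
      exact h
    have hpow1 : ((1 - δ) * Q ^ 2) ^ m ≤ (∑ y : G, (d y : ℝ)) ^ m :=
      pow_le_pow_left₀ (by positivity) hSd m
    have hpow2 : (∑ y : G, (d y : ℝ)) ^ m ≤ (∑ y : G, (d y : ℝ) ^ m) * Q ^ (m - 1) :=
      (div_le_iff₀ (by positivity)).mp hJ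
    have hsplit : ((1 - δ) * Q ^ 2) ^ m = (1 - δ) ^ m * Q * (Q ^ m * Q ^ (m - 1)) := by
      have h2m : 2 * m = (m + (m - 1)) + 1 := by omega
      rw [mul_pow, ← pow_mul, h2m, pow_add, pow_add, pow_one]
      ring
    have hQm : Q ^ (m - 1) * Q = Q ^ m := by
      rw [← pow_succ]
      congr 1
      omega
    have hkey : (1 - δ) ^ m * Q ≤ ((n : ℝ) - 1) + ((m : ℝ) * m - m) := by
      have hpos : (0 : ℝ) < Q ^ m * Q ^ (m - 1) := by positivity
      refine le_of_mul_le_mul_right ?_ hpos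
      calc (1 - δ) ^ m * Q * (Q ^ m * Q ^ (m - 1)) = ((1 - δ) * Q ^ 2) ^ m := hsplit.symm
        _ ≤ (∑ y : G, (d y : ℝ)) ^ m := hpow1
        _ ≤ (∑ y : G, (d y : ℝ) ^ m) * Q ^ (m - 1) := hpow2
        _ ≤ (((n : ℝ) - 1) * Q ^ m + ((m : ℝ) * m - m) * Q ^ (m - 1) * Q) * Q ^ (m - 1) := by
            have hQnn : (0 : ℝ) ≤ Q ^ (m - 1) := by positivity
            exact mul_le_mul_of_nonneg_right hdm hQnn
        _ = (((n : ℝ) - 1) + ((m : ℝ) * m - m)) * (Q ^ m * Q ^ (m - 1)) := by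
            rw [show ((m : ℝ) * m - m) * Q ^ (m - 1) * Q
                = ((m : ℝ) * m - m) * (Q ^ (m - 1) * Q) by ring, hQm]
            ring
    -- lower bound from the contradiction hypothesis
    have hlow : (2 : ℝ) ^ m * ((n : ℝ) - 1) < (1 - δ) ^ m * Q := by
      have h := mul_lt_mul_of_pos_left hq (pow_pos hδ' m)
      have e : (1 - δ) ^ m * ((2 / (1 - δ)) ^ m * ((n : ℝ) - 1))
          = (2 : ℝ) ^ m * ((n : ℝ) - 1) := by
        rw [← mul_assoc, ← mul_pow, mul_div_cancel₀]
        exact ne_of_gt hδ'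
      rw [e] at h
      exact h
    -- cast of the combinatorial inequality
    have haux : ((m : ℝ) * m - m) ≤ ((2 : ℝ) ^ m - 1) * ((n : ℝ) - 1) := by
      have h := (Nat.cast_le (α := ℝ)).mpr (engel_aux_pow m n hm hmn)
      have h2 : (1 : ℕ) ≤ 2 ^ m := Nat.one_le_two_pow
      rw [hcastc] at h
      rw [Nat.cast_mul, Nat.cast_sub h2, Nat.cast_sub hn1] at h
      push_cast at h
      exact h
    have hring : ((n : ℝ) - 1) + ((2 : ℝ) ^ m - 1) * ((n : ℝ) - 1)
        = (2 : ℝ) ^ m * ((n : ℝ) - 1) := by ring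
    linarith
  -- build the contradiction with the w_{m,n}-property
  obtain ⟨t, htinj, htn⟩ := hex
  obtain ⟨N, hNsub, hNcard⟩ := Finset.exists_subset_card_eq htn
  have hMcard : (Finset.univ.image t).card = m := by
    rw [Finset.card_image_of_injective _ htinj, Finset.card_univ, Fintype.card_fin]
  obtain ⟨x, hx, y, hy, hxy⟩ := hprop (Finset.univ.image t) N hMcard hNcard
  obtain ⟨i, _, rfl⟩ := Finset.mem_image.mp hx
  have hyF := hNsub hy
  rw [hFs, Finset.mem_filter] at hyF
  exact hyF.2 i hxy
end

section
/- Let G be a finite group and m ≤ n positive integers. Suppose that for every pair of subsets M, N ⊆ G with |M| = m, |N| = n, some x ∈ M commutes with some y ∈ N. If |G| > (16/3)^m · (n-1), then G is abelian. -/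
open Finset

section Aux
variable {G : Type*} [Group G] [Fintype G] [DecidableEq G]

/-- a noncentral element has a centralizer of at most half the group. -/
lemma aux_centralizer_small (y z : G) (hz : ¬ y * z = z * y) :
    2 * (univ.filter fun x => x * y = y * x).card ≤ Fintype.card G := by
  classical
  set H := Subgroup.centralizer ({y} : Set G) with hH
  have hmem : ∀ x : G, (x * y = y * x) ↔ x ∈ H := fun x =>
    (Subgroup.mem_centralizer_singleton_iff).symm
  have hcard : (univ.filter fun x => x * y = y * x).card = Nat.card H := by
    rw [← Fintype.card_subtype, Nat.card_eq_fintype_card]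
    exact Fintype.card_congr (Equiv.subtypeEquivRight hmem)
  have hne : H ≠ ⊤ := by
    intro h
    have hzH : z ∈ H := h ▸ Subgroup.mem_top z
    rw [← hmem] at hzH
    exact hz hzH.symm
  have hidx : 2 ≤ H.index := Subgroup.one_lt_index_of_ne_top hne
  have hmi : Nat.card H * H.index = Nat.card G := Subgroup.card_mul_index H
  have h2 : Nat.card H * 2 ≤ Nat.card H * H.index := Nat.mul_le_mul_left _ hidx
  rw [hcard, ← Nat.card_eq_fintype_card (α := G), ← hmi]
  linarith

/-- selection of the next element: some `x` outside `prev` fails to commute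
with at least a 3/16 fraction of `V`. -/
lemma aux_select (V : Finset G) (hv : 1 ≤ V.card)
    (hcent : ∀ y ∈ V, 2 * (univ.filter fun x => x * y = y * x).card ≤ Fintype.card G)
    (prev : Finset G) (hprev : 13 * prev.card ≤ 5 * Fintype.card G) :
    ∃ x, x ∉ prev ∧ 3 * V.card ≤ 16 * ((V.filter fun y => ¬ x * y = y * x).card) := by
  by_contra hcon
  push_neg at hcon
  set N := Fintype.card G with hN
  set v := V.card with hvdef
  set k := prev.card with hk
  set f : G → ℕ := fun x => (V.filter fun y => ¬ x * y = y * x).card with hf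
  have hswap : ∑ x, f x = ∑ y ∈ V, (univ.filter fun x => ¬ x * y = y * x).card := by
    simp only [hf, card_filter]
    exact Finset.sum_comm
  have hlow : v * N ≤ 2 * ∑ x, f x := by
    rw [hswap, Finset.mul_sum]
    have h : ∀ y ∈ V, N ≤ 2 * (univ.filter fun x => ¬ x * y = y * x).card := by
      intro y hy
      have h1 := hcent y hy
      have h2 : (univ.filter fun x => x * y = y * x).card
          + (univ.filter fun x => ¬ x * y = y * x).card = N := by
        rw [Finset.card_filter_add_card_filter_not, Finset.card_univ]
      omega
    calc v * N = ∑ _y ∈ V, N := by rw [Finset.sum_const, smul_eq_mul]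
    _ ≤ _ := Finset.sum_le_sum h
  have hsplit : ∑ x ∈ univ \ prev, f x + ∑ x ∈ prev, f x = ∑ x, f x :=
    Finset.sum_sdiff (Finset.subset_univ prev)
  have hprevsum : ∑ x ∈ prev, f x ≤ k * v := by
    calc ∑ x ∈ prev, f x ≤ ∑ _x ∈ prev, v :=
          Finset.sum_le_sum fun x _ => Finset.card_filter_le _ _
    _ = k * v := by rw [Finset.sum_const, smul_eq_mul]
  set r := (univ \ prev).card with hrdef
  have hr : k + r = N := by
    have h := Finset.card_sdiff_of_subset (Finset.subset_univ prev)
    rw [Finset.card_univ] at h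
    have hkN : k ≤ N := by
      rw [hk, hN, ← Finset.card_univ]
      exact Finset.card_le_card (Finset.subset_univ prev)
    omega
  have hrest : 16 * (∑ x ∈ univ \ prev, f x) + r ≤ 3 * v * r := by
    have hstep : ∀ x ∈ univ \ prev, 16 * f x + 1 ≤ 3 * v := by
      intro x hx
      have hxp : x ∉ prev := (Finset.mem_sdiff.mp hx).2
      have h := hcon x hxp
      simp only [ne_eq] at h
      have hfx : f x = (V.filter fun y => ¬ x * y = y * x).card := rfl
      omega
    calc 16 * (∑ x ∈ univ \ prev, f x) + r = ∑ x ∈ univ \ prev, (16 * f x + 1) := by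
          rw [Finset.sum_add_distrib, ← Finset.mul_sum, Finset.sum_const, smul_eq_mul, mul_one]
    _ ≤ ∑ _x ∈ univ \ prev, (3 * v) := Finset.sum_le_sum hstep
    _ = r * (3 * v) := by rw [Finset.sum_const, smul_eq_mul]
    _ = 3 * v * r := by ring
  -- combine everything
  have hvN : v ≤ N := by
    rw [hvdef, hN, ← Finset.card_univ]
    exact Finset.card_le_card (Finset.subset_univ V)
  have h8k : 8 * k ≤ 5 * r := by omega
  have h8kv : 8 * k * v ≤ 5 * r * v := Nat.mul_le_mul_right v h8k
  have hvN' : v * N = v * k + v * r := by rw [← hr]; ring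
  linarith [hlow, hsplit, hprevsum, hrest, hv, hvN, h8k, h8kv, hvN', hr]

lemma aux_arith : ∀ m : ℕ, 1 ≤ m → (13 : ℝ) * ((m : ℝ) - 1) ≤ 5 * (16 / 3) ^ m := by
  intro m hm
  induction m with
  | zero => omega
  | succ p ih =>
    rcases Nat.eq_or_lt_of_le hm with h1 | h2
    · rw [← h1]; norm_num
    · have hp : 1 ≤ p := by omega
      have hih := ih hp
      have hpow : (1 : ℝ) ≤ (16 / 3) ^ p := one_le_pow₀ (by norm_num)
      have hps : (16 / 3 : ℝ) ^ (p + 1) = (16 / 3) * (16 / 3) ^ p := by ring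
      push_cast
      rw [hps]
      nlinarith

end Aux

/-- Contrapositive form: if any `m`-set and `n`-set contain a commuting pair
(`m ≤ n`) and `|G| > (16/3)^m · (n-1)`, then `G` is abelian. -/
theorem neumann_contrapositive (G : Type*) [Group G] [Fintype G] [DecidableEq G]
    (m n : ℕ) (hm : 0 < m) (hmn : m ≤ n)
    (hprop : ∀ M N : Finset G, M.card = m → N.card = n →
      ∃ x ∈ M, ∃ y ∈ N, x * y = y * x)
    (hbig : (16 / 3 : ℝ) ^ m * ((n : ℝ) - 1) < (Fintype.card G : ℝ)) :
    ∀ x y : G, x * y = y * x := by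
  classical
  rcases Nat.lt_or_ge n 2 with hn1 | hn2
  · -- n = 1, hence m = 1 : direct
    have hn : n = 1 := by omega
    have hm1 : m = 1 := by omega
    intro x y
    obtain ⟨x', hx', y', hy', h⟩ := hprop {x} {y}
      (by rw [hm1]; simp) (by rw [hn]; simp)
    simp only [Finset.mem_singleton] at hx' hy'
    rw [← hx', ← hy']; exact h
  -- main case : n ≥ 2
  by_contra hcon
  push_neg at hcon
  obtain ⟨a, b, hab⟩ := hcon
  have hN0 : 0 < Fintype.card G := Fintype.card_pos
  have hn2' : (2 : ℝ) ≤ (n : ℝ) := by exact_mod_cast hn2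
  have hpowpos : (0 : ℝ) < (16 / 3 : ℝ) ^ m := by positivity
  have hGbound : (16 / 3 : ℝ) ^ m ≤ (Fintype.card G : ℝ) := by
    nlinarith
  have harith : 13 * (m - 1) ≤ 5 * Fintype.card G := by
    have hD := aux_arith m hm
    rw [← Nat.cast_le (α := ℝ)]
    push_cast [Nat.cast_sub hm]
    linarith
  -- build the set M by induction
  have hbuild : ∀ k, 1 ≤ k → k ≤ m → ∃ M : Finset G, M.card = k ∧ a ∈ M ∧
      3 ^ k * Fintype.card G ≤
        16 ^ k * (univ.filter fun y => ∀ x ∈ M, ¬ x * y = y * x).card := by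
    intro k
    induction k with
    | zero => intro h; exact absurd h (by omega)
    | succ p ih =>
      intro _ hkm
      rcases Nat.eq_zero_or_pos p with hp0 | hp1
      · -- base case p = 0
        subst hp0
        refine ⟨{a}, by simp, Finset.mem_singleton_self a, ?_⟩
        have hVeq : (univ.filter fun y => ∀ x ∈ ({a} : Finset G), ¬ x * y = y * x)
            = (univ.filter fun x => ¬ x * a = a * x) := by
          ext y
          simp only [Finset.mem_filter, Finset.mem_univ, true_and,
            Finset.mem_singleton, forall_eq]
          constructor <;> (intro h h'; exact h h'.symm)
        rw [hVeq]
        have hsmall := aux_centralizer_small (G := G) a b hab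
        have hsum : (univ.filter fun x => x * a = a * x).card
            + (univ.filter fun x => ¬ x * a = a * x).card = Fintype.card G := by
          rw [Finset.card_filter_add_card_filter_not, Finset.card_univ]
        simp only [zero_add, pow_one]
        omega
      · -- inductive step, 1 ≤ p, p + 1 ≤ m
        obtain ⟨M, hMcard, haM, hMineq⟩ := ih hp1 (by omega)
        set V := univ.filter fun y => ∀ x ∈ M, ¬ x * y = y * x with hV
        have hvpos : 1 ≤ V.card := by
          by_contra h
          have hv0 : V.card = 0 := by omega
          rw [hv0, mul_zero] at hMineq
          have hpos : 0 < 3 ^ p * Fintype.card G := by positivity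
          omega
        have hcent : ∀ y ∈ V, 2 * (univ.filter fun x => x * y = y * x).card
            ≤ Fintype.card G := by
          intro y hy
          have hyV := (Finset.mem_filter.mp hy).2
          have hya := hyV a haM
          exact aux_centralizer_small y a (fun h => hya h.symm)
        have hprev : 13 * M.card ≤ 5 * Fintype.card G := by
          rw [hMcard]
          calc 13 * p ≤ 13 * (m - 1) := by omega
          _ ≤ 5 * Fintype.card G := harith
        obtain ⟨x, hxM, hsel⟩ := aux_select V hvpos hcent M hprev
        refine ⟨insert x M, ?_, Finset.mem_insert_of_mem haM, ?_⟩
        · rw [Finset.card_insert_of_notMem hxM, hMcard]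
        · have hVeq : (univ.filter fun y => ∀ x' ∈ insert x M, ¬ x' * y = y * x')
              = V.filter fun y => ¬ x * y = y * x := by
            rw [hV, Finset.filter_filter]
            ext y
            simp only [Finset.mem_filter, Finset.mem_univ, true_and,
              Finset.forall_mem_insert]
            tauto
          rw [hVeq]
          have h1 : 3 * (3 ^ p * Fintype.card G) ≤ 3 * (16 ^ p * V.card) :=
            Nat.mul_le_mul_left 3 hMineq
          have h2 : 16 ^ p * (3 * V.card)
              ≤ 16 ^ p * (16 * (V.filter fun y => ¬ x * y = y * x).card) :=
            Nat.mul_le_mul_left _ hsel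
          calc 3 ^ (p + 1) * Fintype.card G = 3 * (3 ^ p * Fintype.card G) := by ring
          _ ≤ 3 * (16 ^ p * V.card) := h1
          _ = 16 ^ p * (3 * V.card) := by ring
          _ ≤ 16 ^ p * (16 * (V.filter fun y => ¬ x * y = y * x).card) := h2
          _ = 16 ^ (p + 1) * (V.filter fun y => ¬ x * y = y * x).card := by ring
  obtain ⟨M, hMcard, haM, hMineq⟩ := hbuild m hm le_rfl
  set V := univ.filter fun y => ∀ x ∈ M, ¬ x * y = y * x with hV
  -- V has at least n elements
  have hVn : n ≤ V.card := by
    have hcast : (3 : ℝ) ^ m * (Fintype.card G : ℝ) ≤ 16 ^ m * (V.card : ℝ) := by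
      exact_mod_cast hMineq
    have h3 : (0 : ℝ) < 3 ^ m := by positivity
    have h16 : (0 : ℝ) < 16 ^ m := by positivity
    have hlt : ((n : ℝ) - 1) < (V.card : ℝ) := by
      rw [div_pow] at hbig
      have h1 : 16 ^ m / 3 ^ m * ((n : ℝ) - 1) * 3 ^ m < (Fintype.card G : ℝ) * 3 ^ m :=
        (mul_lt_mul_iff_of_pos_right h3).mpr hbig
      have h2 : 16 ^ m / 3 ^ m * ((n : ℝ) - 1) * 3 ^ m = 16 ^ m * ((n : ℝ) - 1) := by
        field_simp
      rw [h2] at h1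
      nlinarith
    have h' : (n : ℝ) < (V.card : ℝ) + 1 := by linarith
    have h'' : n < V.card + 1 := by exact_mod_cast h'
    omega
  obtain ⟨N', hsub, hNcard⟩ := Finset.exists_subset_card_eq hVn
  obtain ⟨x, hxM, y, hyN, hcomm⟩ := hprop M N' hMcard hNcard
  have hyV := hsub hyN
  exact (Finset.mem_filter.mp hyV).2 x hxM hcomm
end
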